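/- Define mutually recursive functions s, s' : ℕ → ℕ as follows. Successor rules: s(0) = 1; for n > 0 with c'(n) = (x,y): if y = 0 then s(n) = c(x,1); if y > 0 and n is even and x = 0 then s(n) = c(s(a), b) where (a,b) = c'(y); if y > 0 and n is even and x > 0 then s(n) = c(0, c(s'(x), y)); if y > 0 and n is odd, let (m,z) = c'(y): if m = 0 then s(n) = c(x, c(s(a), b)) where (a,b) = c'(z), and if m > 0 then s(n) = c(x, c(0, c(s'(m), z))). Predecessor rules: s'(1) = 0; for n > 1 with c'(n) = (x,y): if y = 1 then s'(n) = c(x,0); if n is even (so y is odd and y > 1), let (r,w) = c'(y): if r = 0 then s'(n) = c(x, c(s(a), b)) where (a,b) = c'(w), and if r > 0 then s'(n) = c(x, c(0, c(s'(r), w))); if n is odd: if x = 0 then s'(n) = c(s(a), b) where (a,b) = c'(y), and if x > 0 then s'(n) = c(0, c(s'(x), y)). Then for every natural number n, s(n) = n + 1, and for every n > 0, s'(n) = n − 1; in particular s is a bijection from ℕ onto the positive naturals, s' is its inverse, and (ℕ, 0, s) is a Peano algebra. -/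

import Mathlib

/-- The pairing function `c`. -/
def c (i j : ℕ) : ℕ := if Odd j then 2 ^ (i + 1) * j else 2 ^ (i + 1) * (j + 1) - 1

/-- The inverse of `c` on positive naturals (returns `(0,0)` at `0`). -/
def c' (n : ℕ) : ℕ × ℕ :=
  (padicValNat 2 (n + n % 2) - 1, (n + n % 2) / 2 ^ padicValNat 2 (n + n % 2) - n % 2)

lemma c'_fst_lt {n : ℕ} (hn : 0 < n) : (c' n).1 < n := by
  have hm : 0 < n + n % 2 := by omega
  have hdvd : (2 : ℕ) ^ padicValNat 2 (n + n % 2) ∣ (n + n % 2) := pow_padicValNat_dvd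
  have hle : (2 : ℕ) ^ padicValNat 2 (n + n % 2) ≤ n + n % 2 := Nat.le_of_dvd hm hdvd
  have hlt : padicValNat 2 (n + n % 2) < 2 ^ padicValNat 2 (n + n % 2) := by
    first | exact Nat.lt_two_pow_self | exact Nat.lt_two_pow_self _
  simp only [c']
  generalize hv : padicValNat 2 (n + n % 2) = v at *
  generalize hp : (2 : ℕ) ^ v = p at *
  omega

lemma c'_snd_lt {n : ℕ} (hn : 0 < n) : (c' n).2 < n := by
  have hm : 0 < n + n % 2 := by omega
  have h2 : (2 : ℕ) ∣ (n + n % 2) := by omega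
  have hv : 1 ≤ padicValNat 2 (n + n % 2) := one_le_padicValNat_of_dvd hm.ne' h2
  have h2le : (2 : ℕ) ≤ 2 ^ padicValNat 2 (n + n % 2) := by
    calc (2:ℕ) = 2 ^ 1 := (pow_one 2).symm
    _ ≤ 2 ^ padicValNat 2 (n + n % 2) := Nat.pow_le_pow_right (by norm_num) hv
  have hle : (n + n % 2) / 2 ^ padicValNat 2 (n + n % 2) ≤ (n + n % 2) / 2 :=
    Nat.div_le_div_left h2le (by norm_num)
  simp only [c']
  generalize hq : (n + n % 2) / 2 ^ padicValNat 2 (n + n % 2) = q at *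
  omega

lemma c'_fst_lt_of_lt {m n : ℕ} (h : m < n) : (c' m).1 < n := by
  rcases Nat.eq_zero_or_pos m with rfl | hm
  · simp [c']; omega
  · exact lt_trans (c'_fst_lt hm) h

lemma c'_snd_lt_of_lt {m n : ℕ} (h : m < n) : (c' m).2 < n := by
  rcases Nat.eq_zero_or_pos m with rfl | hm
  · simp [c']; omega
  · exact lt_trans (c'_snd_lt hm) h

mutual
/-- successor -/
def s : ℕ → ℕ
  | 0 => 1
  | n + 1 =>
    if h0 : (c' (n + 1)).2 = 0 then c (c' (n + 1)).1 1
    else if he : (n + 1) % 2 = 0 then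
      if hx : (c' (n + 1)).1 = 0 then
        c (s (c' ((c' (n + 1)).2)).1) (c' ((c' (n + 1)).2)).2
      else
        c 0 (c (s' (c' (n + 1)).1) (c' (n + 1)).2)
    else
      if hm : (c' ((c' (n + 1)).2)).1 = 0 then
        c (c' (n + 1)).1
          (c (s (c' ((c' ((c' (n + 1)).2)).2)).1) (c' ((c' ((c' (n + 1)).2)).2)).2)
      else
        c (c' (n + 1)).1
          (c 0 (c (s' (c' ((c' (n + 1)).2)).1) (c' ((c' (n + 1)).2)).2))
  termination_by n => n
  decreasing_by
    all_goals first
      | exact c'_fst_lt_of_lt (c'_snd_lt (Nat.succ_pos n))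
      | exact c'_fst_lt_of_lt (c'_snd_lt_of_lt (c'_snd_lt (Nat.succ_pos n)))
      | exact c'_fst_lt (Nat.succ_pos n)

/-- predecessor (with `s' 0 = 0` by convention) -/
def s' : ℕ → ℕ
  | 0 => 0
  | 1 => 0
  | n + 2 =>
    if h1 : (c' (n + 2)).2 = 1 then c (c' (n + 2)).1 0
    else if he : (n + 2) % 2 = 0 then
      if hr : (c' ((c' (n + 2)).2)).1 = 0 then
        c (c' (n + 2)).1
          (c (s (c' ((c' ((c' (n + 2)).2)).2)).1) (c' ((c' ((c' (n + 2)).2)).2)).2)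
      else
        c (c' (n + 2)).1
          (c 0 (c (s' (c' ((c' (n + 2)).2)).1) (c' ((c' (n + 2)).2)).2))
    else
      if hx : (c' (n + 2)).1 = 0 then
        c (s (c' ((c' (n + 2)).2)).1) (c' ((c' (n + 2)).2)).2
      else
        c 0 (c (s' (c' (n + 2)).1) (c' (n + 2)).2)
  termination_by n => n
  decreasing_by
    all_goals first
      | exact c'_fst_lt_of_lt (c'_snd_lt (by omega))
      | exact c'_fst_lt_of_lt (c'_snd_lt_of_lt (c'_snd_lt (by omega)))
      | exact c'_fst_lt (by omega)
end



lemma c_odd {i j : ℕ} (h : j % 2 = 1) : c i j = 2^(i+1) * j := by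
  simp [c, Nat.odd_iff, h]

lemma c_even {i j : ℕ} (h : j % 2 = 0) : c i j = 2^(i+1) * (j+1) - 1 := by
  simp [c, Nat.odd_iff, h]

lemma c_mod_two (i j : ℕ) : c i j % 2 = (j+1) % 2 := by
  have hp : 0 < 2^i := Nat.two_pow_pos i
  rcases Nat.even_or_odd j with hj | hj
  · rw [Nat.even_iff] at hj
    rw [c_even hj]
    have h2 : 2^(i+1)*(j+1) = 2*(2^i*(j+1)) := by ring
    have h1 : 1 ≤ 2^i*(j+1) := Nat.mul_pos hp (by omega)
    omega
  · rw [Nat.odd_iff] at hj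
    rw [c_odd hj]
    have h2 : 2^(i+1)*j = 2*(2^i*j) := by ring
    omega

lemma c_c' {n : ℕ} (hn : 0 < n) : c (c' n).1 (c' n).2 = n := by
  have hm0 : n + n % 2 ≠ 0 := by omega
  have hv1 : 1 ≤ padicValNat 2 (n + n % 2) := one_le_padicValNat_of_dvd (by omega) (by omega)
  have hu_odd : (n + n % 2) / 2 ^ padicValNat 2 (n + n % 2) % 2 = 1 := by
    have h := Nat.not_dvd_ordCompl Nat.prime_two hm0
    rw [Nat.factorization_def _ Nat.prime_two] at h
    omega
  have hdvd : 2 ^ padicValNat 2 (n + n % 2) ∣ (n + n % 2) := pow_padicValNat_dvd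
  have hmu : 2 ^ padicValNat 2 (n + n % 2) * ((n + n % 2) / 2 ^ padicValNat 2 (n + n % 2)) = n + n % 2 :=
    Nat.mul_div_cancel' hdvd
  simp only [c']
  obtain ⟨v, hv⟩ : ∃ v, padicValNat 2 (n + n % 2) = v := ⟨_, rfl⟩
  rw [hv] at hv1 hu_odd hmu ⊢
  obtain ⟨u, hu⟩ : ∃ u, (n + n % 2) / 2 ^ v = u := ⟨_, rfl⟩
  rw [hu] at hu_odd hmu ⊢
  have hvv : v - 1 + 1 = v := by omega
  rcases Nat.even_or_odd n with he | ho
  · rw [Nat.even_iff] at he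
    rw [he]
    simp only [Nat.sub_zero]
    rw [c_odd (by omega), hvv, hmu]
    omega
  · rw [Nat.odd_iff] at ho
    rw [ho]
    have hu1 : 1 ≤ u := by omega
    rw [c_even (by omega), hvv]
    have h1 : u - 1 + 1 = u := by omega
    rw [h1, hmu]
    omega

lemma rep_even {n x y : ℕ} (hn : 0 < n) (h : n % 2 = 0) (hxy : c' n = (x, y)) :
    n = 2^(x+1) * y ∧ y % 2 = 1 := by
  have hc : c x y = n := by have := c_c' hn; rw [hxy] at this; exact this
  have hp := c_mod_two x y
  have hy : y % 2 = 1 := by omega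
  exact ⟨by rw [← hc, c_odd hy], hy⟩

lemma rep_odd {n x y : ℕ} (h : n % 2 = 1) (hxy : c' n = (x, y)) :
    n = 2^(x+1) * (y+1) - 1 ∧ y % 2 = 0 := by
  have hc : c x y = n := by have := c_c' (show 0 < n by omega); rw [hxy] at this; exact this
  have hp := c_mod_two x y
  have hy : y % 2 = 0 := by omega
  exact ⟨by rw [← hc, c_even hy], hy⟩
lemma fst_lt' {n x y : ℕ} (hn : 0 < n) (h : c' n = (x, y)) : x < n := by
  have := c'_fst_lt hn; rw [h] at this; exact this

lemma snd_lt' {n x y : ℕ} (hn : 0 < n) (h : c' n = (x, y)) : y < n := by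
  have := c'_snd_lt hn; rw [h] at this; exact this

lemma main_lemma : ∀ n : ℕ, s n = n + 1 ∧ (0 < n → s' n = n - 1) := by
  intro n
  induction n using Nat.strong_induction_on with
  | _ n IH =>
  constructor
  · match n with
    | 0 => rw [s]
    | k + 1 =>
      obtain ⟨x, y, hxy⟩ : ∃ x y, c' (k+1) = (x, y) := ⟨_, _, rfl⟩
      rw [s]
      simp only [hxy]
      split_ifs with h0 he hx hm
      · -- y = 0
        subst h0
        have hc : c x 0 = k + 1 := by
          have := c_c' (Nat.succ_pos k); rw [hxy] at this; exact this
        rw [c_even (by norm_num)] at hc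
        rw [c_odd (by norm_num)]
        have hp : 0 < 2^(x+1) := Nat.two_pow_pos _
        norm_num at hc ⊢
        omega
      · -- even, x = 0
        obtain ⟨hN, hy⟩ := rep_even (Nat.succ_pos k) he hxy
        subst hx
        obtain ⟨a, b, hab⟩ : ∃ a b, c' y = (a, b) := ⟨_, _, rfl⟩
        simp only [hab]
        obtain ⟨hY, hb⟩ := rep_odd hy hab
        have halt : a < k + 1 :=
          lt_trans (fst_lt' (by omega) hab) (snd_lt' (Nat.succ_pos k) hxy)
        rw [(IH a halt).1, c_even hb]
        have hE : 2^(a+1+1)*(b+1) = 2*(2^(a+1)*(b+1)) := by ring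
        have h1 : 1 ≤ 2^(a+1)*(b+1) := Nat.mul_pos (Nat.two_pow_pos _) (by omega)
        have h4 : (2:ℕ)^(0+1) = 2 := by norm_num
        rw [h4] at hN
        omega
      · -- even, x ≠ 0
        obtain ⟨hN, hy⟩ := rep_even (Nat.succ_pos k) he hxy
        have hxlt : x < k + 1 := fst_lt' (Nat.succ_pos k) hxy
        rw [(IH x hxlt).2 (by omega), c_odd hy]
        have hx1 : x - 1 + 1 = x := by omega
        rw [hx1]
        have h2 : (2:ℕ)^x * y = 2*(2^(x-1)*y) := by
          conv_lhs => rw [← hx1, pow_succ']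
          ring
        have h1 : 1 ≤ 2^(x-1)*y := Nat.mul_pos (Nat.two_pow_pos _) (by omega)
        rw [c_even (by omega)]
        have h3 : (2:ℕ)^(x+1)*y = 2*(2^x*y) := by ring
        have h4 : (2:ℕ)^(0+1) = 2 := by norm_num
        rw [h4]
        omega
      · -- odd, m = 0
        have hNo : (k+1) % 2 = 1 := by omega
        obtain ⟨hN, hy⟩ := rep_odd hNo hxy
        obtain ⟨m', z, hmz⟩ : ∃ m z, c' y = (m, z) := ⟨_, _, rfl⟩
        have hm0 : m' = 0 := by rw [hmz] at hm; exact hm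
        subst hm0
        simp only [hmz]
        obtain ⟨hY, hz⟩ := rep_even (by omega) hy hmz
        obtain ⟨a, b, hab⟩ : ∃ a b, c' z = (a, b) := ⟨_, _, rfl⟩
        simp only [hab]
        obtain ⟨hZ, hb⟩ := rep_odd hz hab
        have halt : a < k + 1 :=
          lt_trans (lt_trans (fst_lt' (by omega) hab) (snd_lt' (by omega) hmz))
            (snd_lt' (Nat.succ_pos k) hxy)
        rw [(IH a halt).1, c_even hb]
        have hE : 2^(a+1+1)*(b+1) = 2*(2^(a+1)*(b+1)) := by ring
        have h1 : 1 ≤ 2^(a+1)*(b+1) := Nat.mul_pos (Nat.two_pow_pos _) (by omega)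
        have h4 : (2:ℕ)^(0+1) = 2 := by norm_num
        rw [h4] at hY
        have hI : 2^(a+1+1)*(b+1) - 1 = y + 1 := by omega
        rw [hI, c_odd (by omega)]
        have h5 : 1 ≤ 2^(x+1)*(y+1) := Nat.mul_pos (Nat.two_pow_pos _) (by omega)
        omega
      · -- odd, m ≠ 0
        have hNo : (k+1) % 2 = 1 := by omega
        obtain ⟨hN, hy⟩ := rep_odd hNo hxy
        obtain ⟨m', z, hmz⟩ : ∃ m z, c' y = (m, z) := ⟨_, _, rfl⟩
        have hm0 : m' ≠ 0 := by rw [hmz] at hm; exact hm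
        simp only [hmz]
        obtain ⟨hY, hz⟩ := rep_even (by omega) hy hmz
        have hmlt : m' < k + 1 :=
          lt_trans (fst_lt' (by omega) hmz) (snd_lt' (Nat.succ_pos k) hxy)
        rw [(IH m' hmlt).2 (by omega), c_odd hz]
        have hm1 : m' - 1 + 1 = m' := by omega
        rw [hm1]
        have h2 : (2:ℕ)^m' * z = 2*(2^(m'-1)*z) := by
          conv_lhs => rw [← hm1, pow_succ']
          ring
        have h1 : 1 ≤ 2^(m'-1)*z := Nat.mul_pos (Nat.two_pow_pos _) (by omega)
        have h3 : (2:ℕ)^(m'+1)*z = 2*(2^m'*z) := by ring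
        have h4 : (2:ℕ)^(0+1) = 2 := by norm_num
        have hInner : c 0 (2^m'*z) = y + 1 := by
          rw [c_even (by omega), h4]
          omega
        rw [hInner, c_odd (by omega)]
        have h5 : 1 ≤ 2^(x+1)*(y+1) := Nat.mul_pos (Nat.two_pow_pos _) (by omega)
        omega
  · intro hn
    match n with
    | 1 => rw [s']
    | k + 2 =>
      obtain ⟨x, y, hxy⟩ : ∃ x y, c' (k+2) = (x, y) := ⟨_, _, rfl⟩
      rw [s']
      simp only [hxy]
      split_ifs with h1 he hr hx
      · -- y = 1
        subst h1
        have hc : c x 1 = k + 2 := by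
          have := c_c' (show 0 < k+2 by omega); rw [hxy] at this; exact this
        rw [c_odd (by norm_num)] at hc
        rw [c_even (by norm_num)]
        have hp : 0 < 2^(x+1) := Nat.two_pow_pos _
        norm_num at hc ⊢
        omega
      · -- even, r = 0
        obtain ⟨hN, hy⟩ := rep_even (by omega) he hxy
        obtain ⟨r, w, hrw⟩ : ∃ r w, c' y = (r, w) := ⟨_, _, rfl⟩
        have hr0 : r = 0 := by rw [hrw] at hr; exact hr
        subst hr0
        simp only [hrw]
        obtain ⟨hY, hw⟩ := rep_odd hy hrw
        have h4 : (2:ℕ)^(0+1) = 2 := by norm_num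
        rw [h4] at hY
        have hw0 : 0 < w := by omega
        obtain ⟨a, b, hab⟩ : ∃ a b, c' w = (a, b) := ⟨_, _, rfl⟩
        simp only [hab]
        obtain ⟨hW, hb⟩ := rep_even hw0 hw hab
        have halt : a < k + 2 :=
          lt_trans (lt_trans (fst_lt' hw0 hab) (snd_lt' (by omega) hrw))
            (snd_lt' (by omega) hxy)
        rw [(IH a halt).1, c_odd hb]
        have hE : 2^(a+1+1)*b = 2*(2^(a+1)*b) := by ring
        rw [c_even (by omega)]
        have hI : 2^(a+1+1)*b + 1 = y := by omega
        rw [hI]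
        omega
      · -- even, r ≠ 0
        obtain ⟨hN, hy⟩ := rep_even (by omega) he hxy
        obtain ⟨r, w, hrw⟩ : ∃ r w, c' y = (r, w) := ⟨_, _, rfl⟩
        have hr0 : r ≠ 0 := by rw [hrw] at hr; exact hr
        simp only [hrw]
        obtain ⟨hY, hw⟩ := rep_odd hy hrw
        have hrlt : r < k + 2 :=
          lt_trans (fst_lt' (by omega) hrw) (snd_lt' (by omega) hxy)
        rw [(IH r hrlt).2 (by omega), c_even hw]
        have hr1 : r - 1 + 1 = r := by omega
        rw [hr1]
        have h2 : (2:ℕ)^r * (w+1) = 2*(2^(r-1)*(w+1)) := by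
          conv_lhs => rw [← hr1, pow_succ']
          ring
        have h1 : 1 ≤ 2^(r-1)*(w+1) := Nat.mul_pos (Nat.two_pow_pos _) (by omega)
        have h4 : (2:ℕ)^(0+1) = 2 := by norm_num
        have h3 : (2:ℕ)^(r+1)*(w+1) = 2*(2^r*(w+1)) := by ring
        have hInner : c 0 (2^r*(w+1) - 1) = y - 1 := by
          rw [c_odd (by omega), h4]
          omega
        rw [hInner]
        rw [c_even (by omega)]
        have h5 : y - 1 + 1 = y := by omega
        rw [h5]
        omega
      · -- odd, x = 0
        have hNo : (k+2) % 2 = 1 := by omega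
        obtain ⟨hN, hy⟩ := rep_odd hNo hxy
        subst hx
        have h4 : (2:ℕ)^(0+1) = 2 := by norm_num
        rw [h4] at hN
        have hy0 : 0 < y := by omega
        obtain ⟨a, b, hab⟩ : ∃ a b, c' y = (a, b) := ⟨_, _, rfl⟩
        simp only [hab]
        obtain ⟨hY, hb⟩ := rep_even hy0 hy hab
        have halt : a < k + 2 :=
          lt_trans (fst_lt' hy0 hab) (snd_lt' (by omega) hxy)
        rw [(IH a halt).1, c_odd hb]
        have hE : 2^(a+1+1)*b = 2*(2^(a+1)*b) := by ring
        omega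
      · -- odd, x ≠ 0
        have hNo : (k+2) % 2 = 1 := by omega
        obtain ⟨hN, hy⟩ := rep_odd hNo hxy
        have hxlt : x < k + 2 := fst_lt' (by omega) hxy
        rw [(IH x hxlt).2 (by omega), c_even hy]
        have hx1 : x - 1 + 1 = x := by omega
        rw [hx1]
        have h2 : (2:ℕ)^x * (y+1) = 2*(2^(x-1)*(y+1)) := by
          conv_lhs => rw [← hx1, pow_succ']
          ring
        have h1 : 1 ≤ 2^(x-1)*(y+1) := Nat.mul_pos (Nat.two_pow_pos _) (by omega)
        rw [c_odd (by omega)]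
        have h4 : (2:ℕ)^(0+1) = 2 := by norm_num
        rw [h4]
        have h3 : (2:ℕ)^(x+1)*(y+1) = 2*(2^x*(y+1)) := by ring
        omega

theorem s_is_succ_s'_is_pred :
    (∀ n : ℕ, s n = n + 1) ∧
    (∀ n : ℕ, 0 < n → s' n = n - 1) ∧
    Set.BijOn s Set.univ {n : ℕ | 0 < n} ∧
    (∀ n : ℕ, 0 < n → s (s' n) = n) ∧
    (∀ n : ℕ, s' (s n) = n) ∧
    (∀ n : ℕ, s n ≠ 0) ∧
    Function.Injective s ∧
    (∀ P : ℕ → Prop, P 0 → (∀ n, P n → P (s n)) → ∀ n, P n) := by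
  have hs : ∀ n, s n = n + 1 := fun n => (main_lemma n).1
  have hp : ∀ n, 0 < n → s' n = n - 1 := fun n => (main_lemma n).2
  refine ⟨hs, hp, ⟨?_, ?_, ?_⟩, ?_, ?_, ?_, ?_, ?_⟩
  · intro a _
    simp only [Set.mem_setOf_eq, hs]
    omega
  · intro a _ b _ h
    rw [hs, hs] at h
    omega
  · intro a ha
    simp only [Set.mem_setOf_eq] at ha
    exact ⟨a - 1, Set.mem_univ _, by rw [hs]; omega⟩
  · intro a ha
    rw [hp a ha, hs]
    omega
  · intro a
    rw [hs a, hp (a+1) (Nat.succ_pos a)]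
    omega
  · intro a
    rw [hs]
    omega
  · intro a b h
    rw [hs, hs] at h
    omega
  · intro P h0 hstep a
    induction a with
    | zero => exact h0
    | succ m ihm =>
      have := hstep m ihm
      rwa [hs m] at this
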